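/- arXiv:1604.03861 — 3 statements merged into one kernel-verified Lean document; each statement's English description precedes it below -/
import Mathlib

section
/- Let G be a finite simple connected graph with girth at least 5, of order at least 2, and not isomorphic to the path P_2. Let S be any MLD-set of G. Then each u ∈ S has at most one neighbor of degree 1 in V(G) \ S; defining, for each u ∈ S, the vertex ū to be this unique degree-1 neighbor of u in V(G) \ S if it exists and u otherwise, the set S̄ = {ū : u ∈ S} is a doubly resolving set of G of cardinality |S|. Consequently, ψ(G) ≤ γ_M(G). -/
open SimpleGraph

variable {V : Type*}

/-- `S` is a resolving set of `G`. -/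
def isResolvingSet (G : SimpleGraph V) (S : Set V) : Prop :=
  ∀ x y : V, x ≠ y → ∃ u ∈ S, G.dist u x ≠ G.dist u y

/-- `S` is a dominating set of `G`. -/
def isDominatingSet (G : SimpleGraph V) (S : Set V) : Prop :=
  ∀ x : V, x ∉ S → ∃ u ∈ S, G.Adj u x

/-- `S` is a metric-locating-dominating set of `G`. -/
def isMLDSet (G : SimpleGraph V) (S : Set V) : Prop :=
  isResolvingSet G S ∧ isDominatingSet G S

/-- `S` is a locating-dominating set of `G`. -/
def isLDSet (G : SimpleGraph V) (S : Set V) : Prop :=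
  isDominatingSet G S ∧
    ∀ x ∉ S, ∀ y ∉ S, x ≠ y → G.neighborSet x ∩ S ≠ G.neighborSet y ∩ S

/-- vertices `u` and `v` doubly resolve the pair `{x, y}`. -/
def doublyResolves (G : SimpleGraph V) (u v x y : V) : Prop :=
  (G.dist u x : ℤ) - (G.dist u y : ℤ) ≠ (G.dist v x : ℤ) - (G.dist v y : ℤ)

/-- the set `S` doubly resolves the pair `{x, y}`. -/
def setDoublyResolves (G : SimpleGraph V) (S : Set V) (x y : V) : Prop :=
  ∃ u ∈ S, ∃ v ∈ S, doublyResolves G u v x y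

/-- `S` is a doubly resolving set of `G`. -/
def isDoublyResolvingSet (G : SimpleGraph V) (S : Set V) : Prop :=
  ∀ x y : V, x ≠ y → setDoublyResolves G S x y

/-- the metric dimension `dim G`. -/
noncomputable def metricDim (G : SimpleGraph V) : ℕ :=
  sInf {n | ∃ S : Set V, isResolvingSet G S ∧ S.ncard = n}

/-- the domination number `γ(G)`. -/
noncomputable def domNum (G : SimpleGraph V) : ℕ :=
  sInf {n | ∃ S : Set V, isDominatingSet G S ∧ S.ncard = n}

/-- the metric-location-domination number `γ_M(G)`. -/
noncomputable def mldNum (G : SimpleGraph V) : ℕ :=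
  sInf {n | ∃ S : Set V, isMLDSet G S ∧ S.ncard = n}

/-- the location-domination number `γ_L(G)`. -/
noncomputable def ldNum (G : SimpleGraph V) : ℕ :=
  sInf {n | ∃ S : Set V, isLDSet G S ∧ S.ncard = n}

/-- the minimum cardinality `ψ(G)` of a doubly resolving set. -/
noncomputable def psiNum (G : SimpleGraph V) : ℕ :=
  sInf {n | ∃ S : Set V, isDoublyResolvingSet G S ∧ S.ncard = n}

/-- a leaf: a vertex of degree 1. -/
def isLeaf (G : SimpleGraph V) (x : V) : Prop := (G.neighborSet x).ncard = 1

/-- a support vertex: a vertex adjacent to some leaf. -/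
def isSupport (G : SimpleGraph V) (u : V) : Prop := ∃ x, isLeaf G x ∧ G.Adj u x

/-- a strong support vertex: a vertex adjacent to at least two leaves. -/
def isStrongSupport (G : SimpleGraph V) (u : V) : Prop :=
  2 ≤ {x | isLeaf G x ∧ G.Adj u x}.ncard

/-- `ℓ(G)`: the number of leaves. -/
noncomputable def numLeaves (G : SimpleGraph V) : ℕ := {x | isLeaf G x}.ncard

/-- `ℓ'(G)`: the number of leaves adjacent to a strong support vertex. -/
noncomputable def numStrongLeaves (G : SimpleGraph V) : ℕ :=
  {x | isLeaf G x ∧ ∃ u, isStrongSupport G u ∧ G.Adj u x}.ncard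

/-- a major vertex: a vertex of degree at least 3. -/
def isMajor (G : SimpleGraph V) (u : V) : Prop := 3 ≤ (G.neighborSet u).ncard

/-- `x` is a terminal vertex of the major vertex `u`:
`x` is a leaf and `u` is the major vertex closest to `x`. -/
def isTerminalOf (G : SimpleGraph V) (u x : V) : Prop :=
  isLeaf G x ∧ isMajor G u ∧ ∀ w, isMajor G w → w ≠ u → G.dist u x < G.dist w x

/-- the terminal degree `ter(u)` of `u`. -/
noncomputable def terDeg (G : SimpleGraph V) (u : V) : ℕ :=
  {x | isTerminalOf G u x}.ncard

/-- `G` is (isomorphic to) a path graph. -/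
def isPathGraph (G : SimpleGraph V) : Prop :=
  ∃ n : ℕ, Nonempty (G ≃g SimpleGraph.pathGraph n)



lemma cycle_len_ge {G : SimpleGraph V} (hg : 5 ≤ G.girth) {a : V} (w : G.Walk a a)
    (hw : w.IsCycle) : 5 ≤ w.length := by
  have hac : ¬ G.IsAcyclic := fun h => h w hw
  have h1 : G.egirth ≠ ⊤ := by rwa [ne_eq, egirth_eq_top]
  have h2 : (5 : ℕ∞) ≤ G.egirth := by
    rw [← ENat.coe_toNat h1]
    exact_mod_cast hg
  have := le_egirth.mp h2 a w hw
  exact_mod_cast this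

lemma no_triangle {G : SimpleGraph V} (hg : 5 ≤ G.girth) {a b c : V}
    (h1 : G.Adj a b) (h2 : G.Adj b c) (h3 : G.Adj c a) : False := by
  have hP : (Walk.cons h2 (Walk.cons h3 Walk.nil) : G.Walk b a).IsPath := by
    simp [Walk.isPath_def, h2.ne, h3.ne, h1.ne']
  have hc : (Walk.cons h1 (Walk.cons h2 (Walk.cons h3 Walk.nil)) : G.Walk a a).IsCycle := by
    rw [Walk.cons_isCycle_iff]
    refine ⟨hP, ?_⟩
    simp only [Walk.edges_cons, Walk.edges_nil, List.mem_cons, List.not_mem_nil, or_false,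
      Sym2.eq, Sym2.rel_iff']
    simp only [Prod.ext_iff, Prod.swap_prod_mk, not_or]
    have := h1.ne; have := h2.ne; have := h3.ne; have := h3.ne'
    tauto
  have := cycle_len_ge hg _ hc
  simp at this

lemma no_square {G : SimpleGraph V} (hg : 5 ≤ G.girth) {a b c d : V}
    (h1 : G.Adj a b) (h2 : G.Adj b c) (h3 : G.Adj c d) (h4 : G.Adj d a)
    (hac : a ≠ c) (hbd : b ≠ d) : False := by
  have hP : (Walk.cons h2 (Walk.cons h3 (Walk.cons h4 Walk.nil)) : G.Walk b a).IsPath := by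
    simp [Walk.isPath_def, h2.ne, h3.ne, h4.ne, h1.ne', hbd, hac.symm]
  have hc : (Walk.cons h1 (Walk.cons h2 (Walk.cons h3 (Walk.cons h4 Walk.nil)))
      : G.Walk a a).IsCycle := by
    rw [Walk.cons_isCycle_iff]
    refine ⟨hP, ?_⟩
    simp only [Walk.edges_cons, Walk.edges_nil, List.mem_cons, List.not_mem_nil, or_false,
      Sym2.eq, Sym2.rel_iff']
    simp only [Prod.ext_iff, Prod.swap_prod_mk, not_or]
    have := h1.ne; have := h2.ne; have := h3.ne; have := h4.ne; have := h4.ne'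
    tauto
  have := cycle_len_ge hg _ hc
  simp at this


lemma leaf_nbr_eq {G : SimpleGraph V} {x u v : V} (hx : isLeaf G x)
    (h1 : G.Adj u x) (h2 : G.Adj v x) : u = v := by
  obtain ⟨a, ha⟩ := Set.ncard_eq_one.mp hx
  have hu : u ∈ G.neighborSet x := h1.symm
  have hv : v ∈ G.neighborSet x := h2.symm
  rw [ha, Set.mem_singleton_iff] at hu hv
  rw [hu, hv]

lemma dist_leaf {G : SimpleGraph V} (hconn : G.Connected) {x u : V} (hx : isLeaf G x)
    (hu : G.Adj u x) {z : V} (hz : z ≠ x) : G.dist z x = G.dist z u + 1 := by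
  have hle : G.dist z x ≤ G.dist z u + 1 := by
    have := hconn.dist_triangle (u := z) (v := u) (w := x)
    rwa [dist_eq_one_iff_adj.mpr hu] at this
  have hge : G.dist z u + 1 ≤ G.dist z x := by
    obtain ⟨p, hp⟩ := hconn.exists_walk_length_eq_dist x z
    obtain ⟨w, hadj, p', rfl⟩ := Walk.exists_eq_cons_of_ne (Ne.symm hz) p
    have hw : w = u := leaf_nbr_eq hx hadj.symm hu
    have h1 : G.dist w z ≤ p'.length := dist_le p'
    rw [Walk.length_cons] at hp
    rw [SimpleGraph.dist_comm (G := G) (u := z) (v := u),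
      SimpleGraph.dist_comm (G := G) (u := z) (v := x), ← hw]
    omega
  omega

lemma dist_pos' {G : SimpleGraph V} (hconn : G.Connected) {z x : V} (hz : z ≠ x) :
    1 ≤ G.dist z x := hconn.pos_dist_of_ne hz

lemma adj_dist {G : SimpleGraph V} {z x : V} (h : G.Adj z x) : G.dist z x = 1 :=
  dist_eq_one_iff_adj.mpr h

/-- Part 1: at most one leaf outside `S` adjacent to a fixed vertex. -/
lemma part1 {G : SimpleGraph V} (hconn : G.Connected) {S : Set V} (hres : isResolvingSet G S)
    {u x y : V} (hxS : x ∉ S) (hyS : y ∉ S) (hx : isLeaf G x) (hy : isLeaf G y)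
    (hux : G.Adj u x) (huy : G.Adj u y) : x = y := by
  by_contra hne
  obtain ⟨w, hwS, hw⟩ := hres x y hne
  have hwx : w ≠ x := fun h => hxS (h ▸ hwS)
  have hwy : w ≠ y := fun h => hyS (h ▸ hwS)
  rw [dist_leaf hconn hx hux hwx, dist_leaf hconn hy huy hwy] at hw
  exact hw rfl



/-- Helper predicate matching the hypothesis on `f` in the theorem. -/
def GoodF (G : SimpleGraph V) (S : Set V) (f : V → V) : Prop :=
  ∀ u ∈ S,
    (f u ∉ S ∧ isLeaf G (f u) ∧ G.Adj u (f u)) ∨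
      (f u = u ∧ ∀ x : V, x ∉ S → isLeaf G x → ¬ G.Adj u x)

lemma dist_leaf' {G : SimpleGraph V} (hconn : G.Connected) {l u : V} (hl : isLeaf G l)
    (hu : G.Adj u l) {z : V} (hz : z ≠ l) : G.dist l z = G.dist u z + 1 := by
  rw [SimpleGraph.dist_comm (G := G) (u := l) (v := z),
    SimpleGraph.dist_comm (G := G) (u := u) (v := z)]
  exact dist_leaf hconn hl hu hz

lemma f_injOn {G : SimpleGraph V} {S : Set V} {f : V → V} (hf : GoodF G S f) :
    Set.InjOn f S := by
  intro u hu v hv h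
  rcases hf u hu with ⟨h1, h2, h3⟩ | ⟨h1, -⟩ <;> rcases hf v hv with ⟨g1, g2, g3⟩ | ⟨g1, -⟩
  · exact leaf_nbr_eq h2 h3 (h ▸ g3)
  · exact absurd (by rw [h.trans g1]; exact hv) h1
  · exact absurd (by rw [← h, h1]; exact hu) g1
  · rw [← h1, h, g1]

lemma transfer {G : SimpleGraph V} (hconn : G.Connected) {S : Set V} {f : V → V}
    (hf : GoodF G S f) {x y : V} {k : ℤ}
    (hconst : ∀ u ∈ S, (G.dist (f u) x : ℤ) - G.dist (f u) y = k)
    (hxim : ∀ u ∈ S, f u ≠ x) :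
    ∀ u ∈ S, (f u ∉ S ∧ isLeaf G (f u) ∧ G.Adj u (f u) ∧ f u = y) ∨
      ((G.dist u x : ℤ) = G.dist u y + k) := by
  intro u hu
  rcases hf u hu with ⟨h1, h2, h3⟩ | ⟨h1, -⟩
  · by_cases hyf : f u = y
    · exact Or.inl ⟨h1, h2, h3, hyf⟩
    · right
      have e1 : G.dist (f u) x = G.dist u x + 1 := by
        rw [SimpleGraph.dist_comm (G := G) (u := f u) (v := x),
          SimpleGraph.dist_comm (G := G) (u := u) (v := x)]
        exact dist_leaf hconn h2 h3 (fun hh => hxim u hu hh.symm)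
      have e2 : G.dist (f u) y = G.dist u y + 1 := by
        rw [SimpleGraph.dist_comm (G := G) (u := f u) (v := y),
          SimpleGraph.dist_comm (G := G) (u := u) (v := y)]
        exact dist_leaf hconn h2 h3 (fun hh => hyf hh.symm)
      have := hconst u hu
      rw [e1, e2] at this
      push_cast at this
      omega
  · right
    have := hconst u hu
    rw [h1] at this
    omega

lemma singleton_mld {G : SimpleGraph V} [Fintype V] (hconn : G.Connected)
    (hcard : 2 ≤ Fintype.card V) (hnp2 : ¬ Nonempty (G ≃g SimpleGraph.pathGraph 2))
    {S : Set V} (hS : isMLDSet G S) {x : V} (hxS : S = {x}) : False := by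
  classical
  have hdom : ∀ v : V, v ≠ x → G.Adj x v := by
    intro v hv
    obtain ⟨u, huS, hadj⟩ := hS.2 v (by rw [hxS]; simpa using hv)
    rw [hxS, Set.mem_singleton_iff] at huS
    exact huS ▸ hadj
  have huniq : ∀ v w : V, v ≠ x → w ≠ x → v = w := by
    intro v w hv hw
    by_contra hne
    obtain ⟨u, huS, hd⟩ := hS.1 v w hne
    rw [hxS, Set.mem_singleton_iff] at huS
    subst huS
    rw [adj_dist (hdom v hv), adj_dist (hdom w hw)] at hd
    exact hd rfl
  obtain ⟨v, hv⟩ := Fintype.exists_ne_of_one_lt_card (by omega) x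
  have hsub : (Finset.univ : Finset V) ⊆ {x, v} := by
    intro w _
    by_cases hw : w = x
    · simp [hw]
    · simp [huniq w v hw hv]
  have hcard2 : Fintype.card V = 2 := by
    have h1 : Fintype.card V ≤ 2 := by
      calc Fintype.card V = (Finset.univ : Finset V).card := rfl
        _ ≤ ({x, v} : Finset V).card := Finset.card_le_card hsub
        _ ≤ 2 := Finset.card_insert_le _ _ |>.trans (by simp)
    omega
  have hA : ∀ a b : V, G.Adj a b ↔ a ≠ b := by
    intro a b
    constructor
    · exact Adj.ne
    · intro hne
      by_cases ha : a = x
      · exact ha ▸ hdom b (fun h => hne (ha.trans h.symm ▸ rfl))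
      · by_cases hb : b = x
        · exact (hb ▸ hdom a ha).symm
        · exact absurd (huniq a b ha hb) hne
  have hGtop : G = ⊤ := by
    ext a b
    simp [hA a b]
  apply hnp2
  rw [hGtop, SimpleGraph.pathGraph_two_eq_top]
  exact ⟨Iso.completeGraph (Fintype.equivFinOfCardEq hcard2)⟩



lemma main_contra {G : SimpleGraph V} [Fintype V] (hconn : G.Connected)
    (hcard : 2 ≤ Fintype.card V) (hg : 5 ≤ G.girth)
    (hnp2 : ¬ Nonempty (G ≃g SimpleGraph.pathGraph 2))
    {S : Set V} (hS : isMLDSet G S) {f : V → V} (hf : GoodF G S f)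
    {x y : V} (hxy : x ≠ y) {k : ℤ} (hk : 1 ≤ k)
    (hconst : ∀ u ∈ S, (G.dist (f u) x : ℤ) - G.dist (f u) y = k) : False := by
  -- Step 1 : x is not in the image of S under f
  have hxim : ∀ u ∈ S, f u ≠ x := by
    intro u hu hfu
    have := hconst u hu
    rw [hfu] at this
    have h0 : G.dist x x = 0 := by simp
    rw [h0] at this
    have : (G.dist x y : ℤ) = -k := by omega
    omega
  have htr := transfer hconn hf hconst hxim
  -- Step 3 : x ∉ S
  have hxS : x ∉ S := by
    intro hxS
    rcases hf x hxS with ⟨h1, h2, h3⟩ | ⟨h1, -⟩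
    · -- f x is a leaf outside S adjacent to x
      by_cases hyfx : y = f x
      · -- y = f x : show S = {x} and use the P₂ exclusion
        have h2' : isLeaf G y := by rw [hyfx]; exact h2
        have h3' : G.Adj x y := by rw [hyfx]; exact h3
        have h1' : y ∉ S := by rw [hyfx]; exact h1
        have hSx : S = {x} := by
          apply Set.eq_singleton_iff_unique_mem.mpr
          refine ⟨hxS, fun u hu => ?_⟩
          rcases htr u hu with ⟨g1, g2, g3, g4⟩ | hrel
          · exact leaf_nbr_eq h2' (g4 ▸ g3) h3'
          · have e2 : G.dist u y = G.dist u x + 1 :=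
              dist_leaf hconn h2' h3' (fun hh => h1' (hh ▸ hu))
            rw [e2] at hrel
            push_cast at hrel
            omega
        exact singleton_mld hconn hcard hnp2 hS hSx
      · -- y ≠ f x : f x witnesses a contradiction in hconst
        have := hconst x hxS
        have e1 : G.dist (f x) x = 1 := adj_dist h3.symm
        have e0 : G.dist (f x) y = 0 := by
          rw [e1] at this
          have : (G.dist (f x) y : ℤ) = 1 - k := by omega
          omega
        exact hyfx ((hconn.dist_eq_zero_iff.mp e0).symm)
    · exact hxim x hxS h1
  -- Step 4 : x has a neighbour u₁ in S
  obtain ⟨u₁, hu₁S, hu₁x⟩ := hS.2 x hxS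
  have hd1 : G.dist u₁ x = 1 := adj_dist hu₁x
  -- Step 5
  rcases htr u₁ hu₁S with ⟨g1, g2, g3, g4⟩ | hrel₁
  · -- Case B : f u₁ = y, a leaf outside S adjacent to u₁
    have hyleaf : isLeaf G y := g4 ▸ g2
    have hyS : y ∉ S := g4 ▸ g1
    have hu₁y : G.Adj u₁ y := g4 ▸ g3
    -- k = dist y x = 2
    have hk2 : k = 2 := by
      have := hconst u₁ hu₁S
      rw [g4] at this
      have e0 : G.dist y y = 0 := by simp
      have e1 : G.dist y x = 2 := by
        have := dist_leaf' hconn hyleaf hu₁y (z := x) hxy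
        rw [hd1] at this
        omega
      rw [e0, e1] at this
      omega
    -- every u ∈ S has f u = y hence u = u₁
    have hSu₁ : S = {u₁} := by
      apply Set.eq_singleton_iff_unique_mem.mpr
      refine ⟨hu₁S, fun u hu => ?_⟩
      rcases htr u hu with ⟨p1, p2, p3, p4⟩ | hrel
      · exact leaf_nbr_eq hyleaf (p4 ▸ p3) hu₁y
      · have e2 : G.dist u y = G.dist u u₁ + 1 :=
          dist_leaf hconn hyleaf hu₁y (fun hh => hyS (hh ▸ hu))
        have e3 : G.dist u x ≤ G.dist u u₁ + G.dist u₁ x := hconn.dist_triangle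
        rw [hd1] at e3
        rw [e2, hk2] at hrel
        push_cast at hrel
        omega
    -- resolving fails for the pair (x,y)
    obtain ⟨w, hwS, hw⟩ := hS.1 x y hxy
    rw [hSu₁, Set.mem_singleton_iff] at hwS
    subst hwS
    rw [hd1, adj_dist hu₁y] at hw
    exact hw rfl
  · -- Case A : y = u₁ ∈ S, k = 1
    have hk1 : k = 1 ∧ G.dist u₁ y = 0 := by
      rw [hd1] at hrel₁
      constructor <;> omega
    have hyu₁ : y = u₁ := (hconn.dist_eq_zero_iff.mp hk1.2).symm
    subst hyu₁
    have hyx : G.Adj y x := hu₁x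
    -- the distance relation holds for every u ∈ S
    have hrel : ∀ u ∈ S, (G.dist u x : ℤ) = G.dist u y + 1 := by
      intro u hu
      rcases htr u hu with ⟨p1, p2, p3, p4⟩ | hrel
      · exact absurd (p4 ▸ hu₁S) p1
      · rwa [hk1.1] at hrel
    -- x is not a leaf
    have hxleaf : ¬ isLeaf G x := by
      intro hxl
      rcases hf y hu₁S with ⟨q1, q2, q3⟩ | ⟨-, q2⟩
      · have : f y = x := part1 hconn hS.1 q1 hxS q2 hxl q3 hyx
        exact hxim y hu₁S this
      · exact q2 x hxS hxl hyx
    -- x has a neighbour z ≠ y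
    have hz : ∃ z, G.Adj x z ∧ z ≠ y := by
      by_contra h
      push_neg at h
      apply hxleaf
      have : G.neighborSet x = {y} := by
        apply Set.eq_singleton_iff_unique_mem.mpr
        exact ⟨hyx.symm, fun z hz => h z hz⟩
      rw [isLeaf, this, Set.ncard_singleton]
    obtain ⟨z, hxz, hzy⟩ := hz
    -- z ∉ S
    have hzS : z ∉ S := by
      intro hzS
      have := hrel z hzS
      rw [adj_dist hxz.symm] at this
      have h0 : G.dist z y = 0 := by omega
      exact hzy (hconn.dist_eq_zero_iff.mp h0)
    -- z is dominated by some w ∈ S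
    obtain ⟨w, hwS, hwz⟩ := hS.2 z hzS
    by_cases hwy : w = y
    · -- triangle x ~ z ~ y ~ x
      exact no_triangle hg hxz (hwy ▸ hwz).symm hyx
    · -- 4-cycle x ~ z ~ w ~ y ~ x
      have hdw : G.dist w x ≤ 2 := by
        have h1 : G.dist w x ≤ G.dist w z + G.dist z x := hconn.dist_triangle
        rw [adj_dist hwz, adj_dist hxz.symm] at h1
        omega
      have := hrel w hwS
      have hwy1 : G.dist w y = 1 := by
        have hge : 1 ≤ G.dist w y := hconn.pos_dist_of_ne hwy
        omega
      have hadj_wy : G.Adj w y := dist_eq_one_iff_adj.mp hwy1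
      exact no_square hg hxz hwz.symm hadj_wy hyx
        (fun h => hxS (h ▸ hwS)) hzy



lemma part2 {G : SimpleGraph V} [Fintype V] (hconn : G.Connected)
    (hcard : 2 ≤ Fintype.card V) (hg : 5 ≤ G.girth)
    (hnp2 : ¬ Nonempty (G ≃g SimpleGraph.pathGraph 2))
    {S : Set V} (hS : isMLDSet G S) {f : V → V} (hf : GoodF G S f) :
    isDoublyResolvingSet G (f '' S) ∧ (f '' S).ncard = S.ncard := by
  constructor
  · intro x y hxy
    by_contra hnd
    rw [setDoublyResolves] at hnd
    push_neg at hnd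
    have hconst0 : ∀ u ∈ S, ∀ v ∈ S,
        (G.dist (f u) x : ℤ) - G.dist (f u) y = (G.dist (f v) x : ℤ) - G.dist (f v) y := by
      intro u hu v hv
      have := hnd (f u) ⟨u, hu, rfl⟩ (f v) ⟨v, hv, rfl⟩
      rw [doublyResolves] at this
      exact not_ne_iff.mp this
    obtain ⟨u₀, hu₀⟩ : ∃ u, u ∈ S := by
      have hne : Nonempty V := Fintype.card_pos_iff.mp (by omega)
      obtain ⟨v⟩ := hne
      by_cases hv : v ∈ S
      · exact ⟨v, hv⟩
      · obtain ⟨u, hu, -⟩ := hS.2 v hv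
        exact ⟨u, hu⟩
    set k : ℤ := (G.dist (f u₀) x : ℤ) - G.dist (f u₀) y with hkdef
    have hconst : ∀ u ∈ S, (G.dist (f u) x : ℤ) - G.dist (f u) y = k :=
      fun u hu => hconst0 u hu u₀ hu₀
    rcases lt_trichotomy k 0 with hlt | heq | hgt
    · apply main_contra hconn hcard hg hnp2 hS hf (Ne.symm hxy) (k := -k) (by omega)
      intro u hu
      have := hconst u hu
      omega
    · -- k = 0 : contradiction with the resolving property
      have hxim : ∀ u ∈ S, f u ≠ x := by
        intro u hu hfu
        have := hconst u hu
        rw [hfu, heq] at this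
        have h0 : G.dist x x = 0 := by simp
        rw [h0] at this
        have h1 : G.dist x y = 0 := by omega
        exact hxy (hconn.dist_eq_zero_iff.mp h1)
      have hyim : ∀ u ∈ S, f u ≠ y := by
        intro u hu hfu
        have := hconst u hu
        rw [hfu, heq] at this
        have h0 : G.dist y y = 0 := by simp
        rw [h0] at this
        have h1 : G.dist y x = 0 := by omega
        exact hxy ((hconn.dist_eq_zero_iff.mp h1).symm)
      have htr := transfer hconn hf hconst hxim
      have hall : ∀ u ∈ S, G.dist u x = G.dist u y := by
        intro u hu
        rcases htr u hu with ⟨-, -, -, g4⟩ | h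
        · exact absurd g4 (hyim u hu)
        · rw [heq] at h
          omega
      obtain ⟨w, hwS, hw⟩ := hS.1 x y hxy
      exact hw (hall w hwS)
    · exact main_contra hconn hcard hg hnp2 hS hf hxy (by omega) hconst
  · exact Set.ncard_image_of_injOn (f_injOn hf)

theorem stmt16 {V : Type*} [Fintype V] (G : SimpleGraph V)
    (hconn : G.Connected) (hcard : 2 ≤ Fintype.card V)
    (hg : 5 ≤ G.girth) (hnp2 : ¬ Nonempty (G ≃g SimpleGraph.pathGraph 2))
    (S : Set V) (hS : isMLDSet G S) :
    (∀ u ∈ S, ∀ x y : V, x ∉ S → y ∉ S → isLeaf G x → isLeaf G y →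
        G.Adj u x → G.Adj u y → x = y) ∧
      (∀ f : V → V,
        (∀ u ∈ S,
          (f u ∉ S ∧ isLeaf G (f u) ∧ G.Adj u (f u)) ∨
            (f u = u ∧ ∀ x : V, x ∉ S → isLeaf G x → ¬ G.Adj u x)) →
        isDoublyResolvingSet G (f '' S) ∧ (f '' S).ncard = S.ncard) ∧
      psiNum G ≤ mldNum G := by
  refine ⟨?_, ?_, ?_⟩
  · intro u hu x y hx hy hlx hly hax hay
    exact part1 hconn hS.1 hx hy hlx hly hax hay
  · intro f hf
    exact part2 hconn hcard hg hnp2 hS hf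
  · classical
    have key : ∀ T : Set V, isMLDSet G T →
        ∃ T' : Set V, isDoublyResolvingSet G T' ∧ T'.ncard = T.ncard := by
      intro T hT
      let f : V → V := fun u =>
        if h : ∃ z, z ∉ T ∧ isLeaf G z ∧ G.Adj u z then h.choose else u
      have hf : GoodF G T f := by
        intro u hu
        by_cases h : ∃ z, z ∉ T ∧ isLeaf G z ∧ G.Adj u z
        · left
          have hfu : f u = h.choose := by simp only [f]; exact dif_pos h
          obtain ⟨h1, h2, h3⟩ := h.choose_spec
          rw [hfu]
          exact ⟨h1, h2, h3⟩
        · right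
          have hfu : f u = u := by simp only [f]; exact dif_neg h
          exact ⟨hfu, fun z hz hl ha => h ⟨z, hz, hl, ha⟩⟩
      obtain ⟨h1, h2⟩ := part2 hconn hcard hg hnp2 hT hf
      exact ⟨f '' T, h1, h2⟩
    rw [psiNum, mldNum]
    have hne : {n | ∃ T : Set V, isMLDSet G T ∧ T.ncard = n}.Nonempty :=
      ⟨S.ncard, S, hS, rfl⟩
    obtain ⟨T, hT, hTc⟩ := Nat.sInf_mem hne
    obtain ⟨T', hT', hTc'⟩ := key T hT
    exact Nat.sInf_le ⟨T', hT', by rw [hTc', hTc]⟩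
end

section
/- For every finite simple connected graph G of order at least 2, ψ(G) ≤ γ_M(G) + γ(G). More precisely, if S₁ is a minimum MLD-set and S₂ is a minimum dominating set of G, then there exists a doubly resolving set of G of cardinality at most |S₁ ∪ S₂| + |S₁ ∩ S₂|. -/
open SimpleGraph

variable {V : Type*}

lemma key_drs {V : Type*} [Fintype V] (G : SimpleGraph V) (hconn : G.Connected)
    (S₁ S₂ : Set V) (h1 : isMLDSet G S₁) (h2 : isDominatingSet G S₂) :
    ∃ D : Set V, isDoublyResolvingSet G D ∧
      D.ncard ≤ (S₁ ∪ S₂).ncard + (S₁ ∩ S₂).ncard := by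
  classical
  obtain ⟨hres, hdom1⟩ := h1
  set D0 : Set V := S₁ ∪ S₂ with hD0
  set P : V → V → Prop := fun x y => y ∉ D0 ∧ ∀ w ∈ D0, G.dist w y = G.dist w x + 1
    with hP
  set partner : V → V := fun x => if h : ∃ y, P x y then h.choose else x with hpartner
  set D : Set V := D0 ∪ partner '' (S₁ ∩ S₂) with hD
  have hzero : ∀ a b : V, G.dist a b = 0 → a = b := fun a b h =>
    (hconn.dist_eq_zero_iff).mp h
  have hpos : ∀ a b : V, a ≠ b → 1 ≤ G.dist a b := fun a b h =>
    hconn.pos_dist_of_ne h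
  refine ⟨D, ?_, ?_⟩
  · -- doubly resolving
    have main : ∀ x y : V, x ≠ y →
        (∃ u ∈ S₁, (G.dist u x : ℤ) - G.dist u y < 0) →
        setDoublyResolves G D x y := by
      rintro x y hxy ⟨u, huS, huneg⟩
      have huD : u ∈ D := Or.inl (Or.inl huS)
      by_cases hconst : ∀ v ∈ D0,
          (G.dist v x : ℤ) - G.dist v y = (G.dist u x : ℤ) - G.dist u y
      · -- constant case
        have hyD0 : y ∉ D0 := by
          intro hy
          have := hconst y hy
          rw [SimpleGraph.dist_self] at this
          omega
        -- S₂ dominator of y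
        have hyS2 : y ∉ S₂ := fun h => hyD0 (Or.inr h)
        obtain ⟨v, hvS, hadj⟩ := h2 y hyS2
        have hvy : G.dist v y = 1 := SimpleGraph.dist_eq_one_iff_adj.mpr hadj
        have hvc := hconst v (Or.inr hvS)
        rw [hvy] at hvc
        -- S₁ dominator of y
        have hyS1 : y ∉ S₁ := fun h => hyD0 (Or.inl h)
        obtain ⟨w, hwS, hadjw⟩ := hdom1 y hyS1
        have hwy : G.dist w y = 1 := SimpleGraph.dist_eq_one_iff_adj.mpr hadjw
        have hwc := hconst w (Or.inl hwS)
        rw [hwy] at hwc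
        have hvx : G.dist v x = 0 := by omega
        have hwx : G.dist w x = 0 := by omega
        have hvxx : v = x := hzero _ _ hvx
        have hwxx : w = x := hzero _ _ hwx
        have hxS1 : x ∈ S₁ := hwxx ▸ hwS
        have hxS2 : x ∈ S₂ := hvxx ▸ hvS
        have hc : (G.dist u x : ℤ) - G.dist u y = -1 := by
          rw [hvxx, SimpleGraph.dist_self] at hvc
          omega
        have hxS : x ∈ S₁ ∩ S₂ := ⟨hxS1, hxS2⟩
        have hPxy : P x y := by
          refine ⟨hyD0, fun w hw => ?_⟩
          have := hconst w hw
          rw [hc] at this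
          omega
        have hex : ∃ y', P x y' := ⟨y, hPxy⟩
        have hchoose : P x hex.choose := hex.choose_spec
        have hpy : partner x = y := by
          rw [hpartner]
          simp only [dif_pos hex]
          by_contra hne
          obtain ⟨z, hzw⟩ := hres hex.choose y hne
          exact hzw.2 (by rw [hchoose.2 z (Or.inl hzw.1), hPxy.2 z (Or.inl hzw.1)])
        have hyD : y ∈ D := Or.inr ⟨x, hxS, hpy⟩
        refine ⟨x, Or.inl (Or.inl hxS1), y, hyD, ?_⟩
        unfold doublyResolves
        rw [SimpleGraph.dist_self, SimpleGraph.dist_self]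
        have h1' : 1 ≤ G.dist x y := hpos _ _ hxy
        have h2' : 1 ≤ G.dist y x := hpos _ _ (Ne.symm hxy)
        push_cast
        omega
      · push_neg at hconst
        obtain ⟨v, hv, hne⟩ := hconst
        exact ⟨v, Or.inl hv, u, huD, hne⟩
    intro x y hxy
    obtain ⟨u, huS, hune⟩ := hres x y hxy
    rcases lt_or_gt_of_ne hune with h | h
    · exact main x y hxy ⟨u, huS, by push_cast; omega⟩
    · obtain ⟨a, ha, b, hb, hab⟩ := main y x hxy.symm ⟨u, huS, by push_cast; omega⟩
      refine ⟨a, ha, b, hb, fun hh => hab ?_⟩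
      unfold doublyResolves at *
      omega
  · calc D.ncard ≤ D0.ncard + (partner '' (S₁ ∩ S₂)).ncard :=
          Set.ncard_union_le _ _
      _ ≤ D0.ncard + (S₁ ∩ S₂).ncard := by
          exact Nat.add_le_add_left (Set.ncard_image_le (Set.toFinite (S₁ ∩ S₂))) _

theorem stmt18 {V : Type*} [Fintype V] (G : SimpleGraph V)
    (hconn : G.Connected) (hcard : 2 ≤ Fintype.card V) :
    psiNum G ≤ mldNum G + domNum G ∧
      ∀ S₁ S₂ : Set V, isMLDSet G S₁ → S₁.ncard = mldNum G →
        isDominatingSet G S₂ → S₂.ncard = domNum G →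
        ∃ D : Set V, isDoublyResolvingSet G D ∧
          D.ncard ≤ (S₁ ∪ S₂).ncard + (S₁ ∩ S₂).ncard := by
  classical
  have hmld_univ : isMLDSet G (Set.univ : Set V) := by
    constructor
    · intro x y hxy
      exact ⟨x, Set.mem_univ x, by
        rw [SimpleGraph.dist_self]
        exact (hconn.pos_dist_of_ne hxy).ne⟩
    · exact fun x hx => absurd (Set.mem_univ x) hx
  have hmld_mem := Nat.sInf_mem (s := {n | ∃ S : Set V, isMLDSet G S ∧ S.ncard = n})
    ⟨(Set.univ : Set V).ncard, Set.univ, hmld_univ, rfl⟩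
  have hdom_mem := Nat.sInf_mem (s := {n | ∃ S : Set V, isDominatingSet G S ∧ S.ncard = n})
    ⟨(Set.univ : Set V).ncard, Set.univ, hmld_univ.2, rfl⟩
  obtain ⟨S₁, hS₁, hc₁⟩ := hmld_mem
  obtain ⟨S₂, hS₂, hc₂⟩ := hdom_mem
  constructor
  · obtain ⟨D, hDres, hDcard⟩ := key_drs G hconn S₁ S₂ hS₁ hS₂
    have h1 : psiNum G ≤ D.ncard := Nat.sInf_le ⟨D, hDres, rfl⟩
    have h2 : (S₁ ∪ S₂).ncard + (S₁ ∩ S₂).ncard = S₁.ncard + S₂.ncard :=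
      Set.ncard_union_add_ncard_inter _ _ (Set.toFinite _) (Set.toFinite _)
    unfold mldNum domNum
    omega
  · intro T₁ T₂ h1 _ h2 _
    exact key_drs G hconn T₁ T₂ h1 h2
end

section
/- For every finite simple connected graph G of order at least 2, dim(G) ≤ ψ(G) ≤ 2·γ_M(G) ≤ 2·γ_L(G); moreover, if G has girth at least 5 then the sharper chain dim(G) ≤ ψ(G) ≤ γ_M(G) ≤ γ_L(G) holds. -/
open SimpleGraph

variable {V : Type*}

namespace Stmt19Aux

open SimpleGraph

variable {V : Type*} [Fintype V] {G : SimpleGraph V} {S : Set V}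

/-- the "bad pair" structure: `x` is outside `S`, `y ∈ S` is adjacent to `x`,
and every vertex of `S` is one farther from `x` than from `y`. -/
def Bad (G : SimpleGraph V) (S : Set V) (x y : V) : Prop :=
  x ∉ S ∧ y ∈ S ∧ G.Adj y x ∧ ∀ w ∈ S, G.dist w x = G.dist w y + 1

lemma sdr_comm {x y : V} (h : setDoublyResolves G S x y) : setDoublyResolves G S y x := by
  obtain ⟨u, hu, v, hv, h⟩ := h
  exact ⟨u, hu, v, hv, by unfold doublyResolves at h ⊢; omega⟩

lemma not_sdr_iff {x y : V} : ¬ setDoublyResolves G S x y ↔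
    ∀ u ∈ S, ∀ v ∈ S,
      (G.dist u x : ℤ) - (G.dist u y : ℤ) = (G.dist v x : ℤ) - (G.dist v y : ℤ) := by
  unfold setDoublyResolves doublyResolves
  push_neg
  rfl

lemma bad_of_const_pos (hconn : G.Connected) (hS : isMLDSet G S) {x y : V} {c : ℤ}
    (hC : ∀ w ∈ S, (G.dist w x : ℤ) = (G.dist w y : ℤ) + c) (hc : 0 < c) : Bad G S x y := by
  have hxS : x ∉ S := by
    intro hx
    have := hC x hx
    rw [SimpleGraph.dist_self] at this
    omega
  obtain ⟨u, hu, hadj⟩ := hS.2 x hxS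
  have h1 : G.dist u x = 1 := SimpleGraph.dist_eq_one_iff_adj.mpr hadj
  have h2 := hC u hu
  rw [h1] at h2
  have hduy : G.dist u y = 0 := by omega
  have huy : u = y := (hconn.dist_eq_zero_iff).mp hduy
  have hc1 : c = 1 := by omega
  subst huy
  refine ⟨hxS, hu, hadj, fun w hw => ?_⟩
  have := hC w hw
  omega

lemma bad_of_const (hconn : G.Connected) (hS : isMLDSet G S) {x y : V} (hxy : x ≠ y)
    (hC : ∀ u ∈ S, ∀ v ∈ S,
      (G.dist u x : ℤ) - (G.dist u y : ℤ) = (G.dist v x : ℤ) - (G.dist v y : ℤ)) :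
    Bad G S x y ∨ Bad G S y x := by
  obtain ⟨u0, hu0, hne0⟩ := hS.1 x y hxy
  set c : ℤ := (G.dist u0 x : ℤ) - (G.dist u0 y : ℤ) with hcdef
  have hC' : ∀ w ∈ S, (G.dist w x : ℤ) = (G.dist w y : ℤ) + c := by
    intro w hw
    have := hC w hw u0 hu0
    omega
  have hcne : c ≠ 0 := by
    intro h
    rw [h] at hcdef
    exact hne0 (by omega)
  rcases lt_or_gt_of_ne hcne with h | h
  · right
    refine bad_of_const_pos hconn hS (c := -c) (fun w hw => ?_) (by omega)
    have := hC' w hw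
    omega
  · left
    exact bad_of_const_pos hconn hS hC' h

lemma bad_unique (hres : isResolvingSet G S) {x x' y : V} (h1 : Bad G S x y)
    (h2 : Bad G S x' y) : x = x' := by
  by_contra hne
  obtain ⟨u, hu, hned⟩ := hres x x' hne
  exact hned ((h1.2.2.2 u hu).trans (h2.2.2.2 u hu).symm)

lemma leaf_dist (hconn : G.Connected) {x y : V} (hN : G.neighborSet x = {y}) :
    ∀ w, w ≠ x → G.dist w x = G.dist w y + 1 := by
  intro w hw
  have hadj : G.Adj x y := by
    have : y ∈ G.neighborSet x := by rw [hN]; rfl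
    exact this
  have hle : G.dist w x ≤ G.dist w y + 1 := by
    have h1 : G.dist y x = 1 := SimpleGraph.dist_eq_one_iff_adj.mpr hadj.symm
    have := hconn.dist_triangle (u := w) (v := y) (w := x)
    omega
  have hge : G.dist w y + 1 ≤ G.dist w x := by
    obtain ⟨p, hp⟩ := (hconn x w).exists_walk_length_eq_dist
    cases p with
    | nil => exact absurd rfl hw
    | @cons _ z _ h q =>
      have hz : y = z := by
        have : z ∈ G.neighborSet x := h
        rw [hN] at this
        exact this.symm
      subst hz
      have h1 : G.dist y w ≤ q.length := SimpleGraph.dist_le q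
      rw [SimpleGraph.Walk.length_cons] at hp
      rw [SimpleGraph.dist_comm (u := w) (v := y), SimpleGraph.dist_comm (u := w) (v := x)]
      omega
  omega

lemma girth_le_length {a : V} {w : G.Walk a a} (hw : w.IsCycle) : G.girth ≤ w.length := by
  have h : G.egirth ≤ (w.length : ℕ∞) := le_egirth.mp le_rfl a w hw
  have := ENat.toNat_le_toNat h (by simp)
  simpa [SimpleGraph.girth] using this

lemma no_tri (hg : 5 ≤ G.girth) {a b c : V} (h1 : G.Adj a b) (h2 : G.Adj b c)
    (h3 : G.Adj c a) : False := by
  have hca : c ≠ a := h3.ne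
  have hab : a ≠ b := h1.ne
  have hbc : b ≠ c := h2.ne
  set w : G.Walk a a := .cons h1 (.cons h2 (.cons h3 .nil)) with hwdef
  have hcyc : w.IsCycle := by
    constructor
    · constructor
      · constructor
        simp [hwdef, SimpleGraph.Walk.edges, Sym2.eq_iff]
        aesop
      · simp [hwdef]
    · simp [hwdef]
      aesop
  have := girth_le_length hcyc
  simp [hwdef] at this
  omega

lemma no_square (hg : 5 ≤ G.girth) {a b c d : V} (h1 : G.Adj a b) (h2 : G.Adj b c)
    (h3 : G.Adj c d) (h4 : G.Adj d a) (hac : a ≠ c) (hbd : b ≠ d) : False := by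
  have hab : a ≠ b := h1.ne
  have hbc : b ≠ c := h2.ne
  have hcd : c ≠ d := h3.ne
  have hda : d ≠ a := h4.ne
  set w : G.Walk a a := .cons h1 (.cons h2 (.cons h3 (.cons h4 .nil))) with hwdef
  have hcyc : w.IsCycle := by
    constructor
    · constructor
      · constructor
        simp [hwdef, SimpleGraph.Walk.edges, Sym2.eq_iff]
        aesop
      · simp [hwdef]
    · simp [hwdef]
      aesop
  have := girth_le_length hcyc
  simp [hwdef] at this
  omega

lemma three_le_card (hg : 5 ≤ G.girth) : 3 ≤ Fintype.card V := by
  have hac : ¬ G.IsAcyclic := by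
    intro h
    have := h.girth_eq_zero (G := G)
    omega
  obtain ⟨a, w, hw, hlen⟩ := (SimpleGraph.exists_girth_eq_length (G := G)).mpr hac
  have h3 : 3 ≤ w.length := hw.three_le_length
  have hnd : w.support.tail.Nodup := hw.support_nodup
  have hl : w.support.tail.length = w.length := by
    have := SimpleGraph.Walk.length_support w
    simp [List.length_tail, this]
  have := hnd.length_le_card
  omega

lemma mld_of_ld (hconn : G.Connected) (hS : isLDSet G S) : isMLDSet G S := by
  obtain ⟨hdom, hloc⟩ := hS
  refine ⟨?_, hdom⟩
  intro x y hxy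
  by_cases hx : x ∈ S
  · exact ⟨x, hx, by rw [SimpleGraph.dist_self]; exact (hconn.pos_dist_of_ne hxy).ne⟩
  · by_cases hy : y ∈ S
    · exact ⟨y, hy, by rw [SimpleGraph.dist_self]; exact (hconn.pos_dist_of_ne (Ne.symm hxy)).ne'⟩
    · by_contra hn
      push_neg at hn
      apply hloc x hx y hy hxy
      ext u
      simp only [Set.mem_inter_iff, SimpleGraph.mem_neighborSet]
      constructor
      · rintro ⟨hadj, huS⟩
        refine ⟨?_, huS⟩
        have h1 : G.dist u x = 1 := SimpleGraph.dist_eq_one_iff_adj.mpr hadj.symm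
        have h2 := hn u huS
        rw [h1] at h2
        exact (SimpleGraph.dist_eq_one_iff_adj.mp h2.symm).symm
      · rintro ⟨hadj, huS⟩
        refine ⟨?_, huS⟩
        have h1 : G.dist u y = 1 := SimpleGraph.dist_eq_one_iff_adj.mpr hadj.symm
        have h2 := hn u huS
        rw [h1] at h2
        exact (SimpleGraph.dist_eq_one_iff_adj.mp h2).symm

lemma exists_dr_of_mld (hconn : G.Connected) (hS : isMLDSet G S) :
    ∃ T : Set V, isDoublyResolvingSet G T ∧ T.ncard ≤ 2 * S.ncard := by
  classical
  set f : V → V := fun y => if h : ∃ x, Bad G S x y then h.choose else y with hf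
  refine ⟨S ∪ f '' S, ?_, ?_⟩
  · intro x y hxy
    by_contra hns
    have hC := not_sdr_iff.mp hns
    have hCS : ∀ u ∈ S, ∀ v ∈ S,
        (G.dist u x : ℤ) - (G.dist u y : ℤ) = (G.dist v x : ℤ) - (G.dist v y : ℤ) :=
      fun u hu v hv => hC u (Or.inl hu) v (Or.inl hv)
    have key : ∀ a b : V, a ≠ b → Bad G S a b → setDoublyResolves G (S ∪ f '' S) a b := by
      intro a b hab hB
      have hb : b ∈ S := hB.2.1
      have hex : ∃ x', Bad G S x' b := ⟨a, hB⟩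
      have hfb : f b = a := by
        have h1 : f b = hex.choose := dif_pos hex
        rw [h1]
        exact bad_unique hS.1 hex.choose_spec hB
      refine ⟨a, Or.inr ⟨b, hb, hfb⟩, b, Or.inl hb, ?_⟩
      unfold doublyResolves
      have hd := hconn.pos_dist_of_ne hab
      rw [SimpleGraph.dist_self, SimpleGraph.dist_self, SimpleGraph.dist_comm (u := b) (v := a)]
      omega
    rcases bad_of_const hconn hS hxy hCS with h | h
    · exact hns (key x y hxy h)
    · exact hns (sdr_comm (key y x (Ne.symm hxy) h))
  · calc (S ∪ f '' S).ncard ≤ S.ncard + (f '' S).ncard := Set.ncard_union_le _ _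
      _ ≤ S.ncard + S.ncard := by
          have := Set.ncard_image_le (f := f) (s := S) (Set.toFinite S)
          omega
      _ = 2 * S.ncard := by ring

lemma bad_leaf (hconn : G.Connected) (hg : 5 ≤ G.girth) (hS : isMLDSet G S) {x y : V}
    (hB : Bad G S x y) : G.neighborSet x = {y} := by
  obtain ⟨hxS, hyS, hadj_yx, hd⟩ := hB
  ext z
  simp only [SimpleGraph.mem_neighborSet, Set.mem_singleton_iff]
  constructor
  · intro hxz
    by_contra hzy
    have hzS : z ∉ S := by
      intro hz
      have h0 := hd z hz
      have h1 : G.dist z x = 1 := SimpleGraph.dist_eq_one_iff_adj.mpr hxz.symm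
      rw [h1] at h0
      have h2 : G.dist z y = 0 := by omega
      exact hzy (hconn.dist_eq_zero_iff.mp h2)
    obtain ⟨w, hwS, hwz⟩ := hS.2 z hzS
    have hwx := hd w hwS
    have h1 : G.dist w z = 1 := SimpleGraph.dist_eq_one_iff_adj.mpr hwz
    have h2 : G.dist z x = 1 := SimpleGraph.dist_eq_one_iff_adj.mpr hxz.symm
    have htri : G.dist w x ≤ G.dist w z + G.dist z x := hconn.dist_triangle
    by_cases hwx1 : G.dist w x = 1
    · have hwy0 : G.dist w y = 0 := by omega
      have hwy : w = y := hconn.dist_eq_zero_iff.mp hwy0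
      subst hwy
      exact no_tri hg hxz hwz.symm hadj_yx
    · have hwx2 : G.dist w x = 2 := by omega
      have hwy1 : G.dist w y = 1 := by omega
      have hadj_wy : G.Adj w y := SimpleGraph.dist_eq_one_iff_adj.mp hwy1
      have hxw : x ≠ w := by
        intro h
        rw [← h, SimpleGraph.dist_comm, SimpleGraph.dist_self] at hwx2
        omega
      exact no_square hg hxz hwz.symm hadj_wy hadj_yx hxw hzy
  · intro h
    subst h
    exact hadj_yx.symm

lemma exists_dr_of_mld_girth (hconn : G.Connected) (hg : 5 ≤ G.girth) (hS : isMLDSet G S) :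
    ∃ T : Set V, isDoublyResolvingSet G T ∧ T.ncard ≤ S.ncard := by
  classical
  set g : V → V := fun y => if h : ∃ x, Bad G S x y then h.choose else y with hgdef
  set T := g '' S with hT
  have hgood : ∀ y ∈ S, (∃ x, Bad G S x y) →
      Bad G S (g y) y ∧ G.neighborSet (g y) = {y} := by
    intro y _ h
    have h1 : g y = h.choose := dif_pos h
    have hB : Bad G S (g y) y := by rw [h1]; exact h.choose_spec
    exact ⟨hB, bad_leaf hconn hg hS hB⟩
  have hid : ∀ y ∈ S, ¬(∃ x, Bad G S x y) → g y = y := fun y _ h => dif_neg h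
  refine ⟨T, ?_, Set.ncard_image_le (Set.toFinite S)⟩
  have core : ∀ a b : V, a ≠ b →
      (∀ u ∈ T, ∀ v ∈ T,
        (G.dist u a : ℤ) - (G.dist u b : ℤ) = (G.dist v a : ℤ) - (G.dist v b : ℤ)) →
      ∀ y ∈ S, Bad G S b y → False := by
    intro a b hab hC y hy hBad
    have hleafb : G.neighborSet b = {y} := bad_leaf hconn hg hS hBad
    have hbT : b ∈ T := by
      have hex : ∃ x, Bad G S x y := ⟨b, hBad⟩
      have h1 := (hgood y hy hex).1
      have h2 : g y = b := bad_unique hS.1 h1 hBad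
      exact ⟨y, hy, h2⟩
    have hdist_b : ∀ v, v ≠ b → G.dist v b = G.dist v y + 1 := leaf_dist hconn hleafb
    have hbS : b ∉ S := hBad.1
    have hadj_yb : G.Adj y b := hBad.2.2.1
    set c := G.dist b a with hc
    have hcpos : 0 < c := hconn.pos_dist_of_ne (Ne.symm hab)
    have hCb : ∀ u ∈ T, (G.dist u a : ℤ) - (G.dist u b : ℤ) = (c : ℤ) := by
      intro u hu
      rw [hC u hu b hbT, SimpleGraph.dist_self]
      omega
    have haT : a ∉ T := by
      intro ha
      have h1 := hCb a ha
      rw [SimpleGraph.dist_self] at h1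
      have h2 := hconn.pos_dist_of_ne hab
      omega
    have key : ∀ u ∈ T, u ≠ b → (G.dist u a : ℤ) = (G.dist u y : ℤ) + 1 + c := by
      intro u hu hub
      have h1 := hCb u hu
      rw [hdist_b u hub] at h1
      push_cast at h1 ⊢
      omega
    by_cases hother : ∃ u ∈ T, u ≠ b
    · obtain ⟨w0, hw0T, hw0b⟩ := hother
      by_cases haS : a ∈ S
      · have hganea : g a ≠ a := by
          intro h
          exact haT ⟨a, haS, h⟩
        have hex : ∃ x, Bad G S x a := by
          by_contra h
          exact hganea (hid a haS h)
        obtain ⟨hBa, hNa⟩ := hgood a haS hex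
        have hxaT : g a ∈ T := ⟨a, haS, rfl⟩
        by_cases hxab : g a = b
        · have hadj : G.Adj a b := by rw [← hxab]; exact hBa.2.2.1
          have hay : a = y := by
            have : a ∈ G.neighborSet b := hadj.symm
            rwa [hleafb] at this
          have hc1 : c = 1 := by
            rw [hc, hay, SimpleGraph.dist_comm]
            exact SimpleGraph.dist_eq_one_iff_adj.mpr hadj_yb
          have h1 := key w0 hw0T hw0b
          rw [hay] at h1
          omega
        · have h1 := key (g a) hxaT hxab
          have h2 : G.dist (g a) a = 1 := SimpleGraph.dist_eq_one_iff_adj.mpr hBa.2.2.1.symm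
          rw [h2] at h1
          omega
      · obtain ⟨u, huS, hua⟩ := hS.2 a haS
        by_cases hgu : g u = u
        · have huT : u ∈ T := ⟨u, huS, hgu⟩
          have hub : u ≠ b := fun h => hbS (h ▸ huS)
          have h1 := key u huT hub
          have h2 : G.dist u a = 1 := SimpleGraph.dist_eq_one_iff_adj.mpr hua
          rw [h2] at h1
          omega
        · have hex : ∃ x, Bad G S x u := by
            by_contra h
            exact hgu (hid u huS h)
          obtain ⟨hBu, hNu⟩ := hgood u huS hex
          have hxuT : g u ∈ T := ⟨u, huS, rfl⟩
          by_cases hxub : g u = b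
          · have hadj : G.Adj u b := by rw [← hxub]; exact hBu.2.2.1
            have huy : u = y := by
              have : u ∈ G.neighborSet b := hadj.symm
              rwa [hleafb] at this
            have hya : G.dist y a = 1 := SimpleGraph.dist_eq_one_iff_adj.mpr (huy ▸ hua)
            have h1 := key w0 hw0T hw0b
            have h2 : G.dist w0 a ≤ G.dist w0 y + G.dist y a := hconn.dist_triangle
            rw [hya] at h2
            omega
          · have h1 := key (g u) hxuT hxub
            have h2 : G.dist (g u) a ≤ G.dist (g u) u + G.dist u a := hconn.dist_triangle
            have h3 : G.dist (g u) u = 1 := SimpleGraph.dist_eq_one_iff_adj.mpr hBu.2.2.1.symm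
            have h4 : G.dist u a = 1 := SimpleGraph.dist_eq_one_iff_adj.mpr hua
            have h5 : G.dist (g u) y = 0 := by omega
            have h6 : g u = y := hconn.dist_eq_zero_iff.mp h5
            exact hBu.1 (h6 ▸ hy)
    · push_neg at hother
      have hSy : ∀ w ∈ S, w = y := by
        intro w hw
        have hgwb : g w = b := hother (g w) ⟨w, hw, rfl⟩
        have hgw_ne : ¬ (g w = w) := by
          intro h
          rw [h] at hgwb
          exact hbS (hgwb ▸ hw)
        have hex : ∃ x, Bad G S x w := by
          by_contra h
          exact hgw_ne (hid w hw h)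
        obtain ⟨hBw, _⟩ := hgood w hw hex
        rw [hgwb] at hBw
        have : w ∈ G.neighborSet b := hBw.2.2.1.symm
        rwa [hleafb] at this
      have h3 := three_le_card hg
      have h2 : 2 ≤ (Finset.univ.erase y).card := by
        have := Finset.card_erase_of_mem (Finset.mem_univ y)
        rw [this, Finset.card_univ]
        omega
      obtain ⟨v1, hv1, v2, hv2, hv12⟩ := Finset.one_lt_card.mp h2
      have hv1y : v1 ≠ y := Finset.ne_of_mem_erase hv1
      have hv2y : v2 ≠ y := Finset.ne_of_mem_erase hv2
      obtain ⟨u, huS, hneu⟩ := hS.1 v1 v2 hv12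
      have huy : u = y := hSy u huS
      rw [huy] at hneu
      have hv1S : v1 ∉ S := fun h => hv1y (hSy v1 h)
      have hv2S : v2 ∉ S := fun h => hv2y (hSy v2 h)
      obtain ⟨u1, hu1S, hadj1⟩ := hS.2 v1 hv1S
      obtain ⟨u2, hu2S, hadj2⟩ := hS.2 v2 hv2S
      have e1 : u1 = y := hSy u1 hu1S
      have e2 : u2 = y := hSy u2 hu2S
      rw [e1] at hadj1
      rw [e2] at hadj2
      have d1 : G.dist y v1 = 1 := SimpleGraph.dist_eq_one_iff_adj.mpr hadj1
      have d2 : G.dist y v2 = 1 := SimpleGraph.dist_eq_one_iff_adj.mpr hadj2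
      exact hneu (d1.trans d2.symm)
  intro a b hab
  by_contra hns
  have hC := not_sdr_iff.mp hns
  by_cases hbX : ∃ y ∈ S, Bad G S b y
  · obtain ⟨y, hy, hB⟩ := hbX
    exact core a b hab hC y hy hB
  · by_cases haX : ∃ y ∈ S, Bad G S a y
    · obtain ⟨y, hy, hB⟩ := haX
      refine core b a (Ne.symm hab) (fun u hu v hv => ?_) y hy hB
      have := hC u hu v hv
      omega
    · have hCS : ∀ u ∈ S, ∀ v ∈ S,
          (G.dist u a : ℤ) - (G.dist u b : ℤ) = (G.dist v a : ℤ) - (G.dist v b : ℤ) := by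
        have htrans : ∀ w ∈ S, (G.dist w a : ℤ) - (G.dist w b : ℤ) =
            (G.dist (g w) a : ℤ) - (G.dist (g w) b : ℤ) := by
          intro w hw
          by_cases hex : ∃ x, Bad G S x w
          · obtain ⟨hBw, hNw⟩ := hgood w hw hex
            have hga : g w ≠ a := fun h => haX ⟨w, hw, h ▸ hBw⟩
            have hgb : g w ≠ b := fun h => hbX ⟨w, hw, h ▸ hBw⟩
            have h1 : G.dist a (g w) = G.dist a w + 1 := leaf_dist hconn hNw a (Ne.symm hga)
            have h2 : G.dist b (g w) = G.dist b w + 1 := leaf_dist hconn hNw b (Ne.symm hgb)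
            rw [SimpleGraph.dist_comm (u := g w) (v := a), SimpleGraph.dist_comm (u := g w) (v := b), h1, h2,
              SimpleGraph.dist_comm (u := a) (v := w), SimpleGraph.dist_comm (u := b) (v := w)]
            push_cast
            ring
          · rw [hid w hw hex]
        intro u hu v hv
        rw [htrans u hu, htrans v hv]
        exact hC _ ⟨u, hu, rfl⟩ _ ⟨v, hv, rfl⟩
      rcases bad_of_const hconn hS hab hCS with h | h
      · exact haX ⟨b, h.2.1, h⟩
      · exact hbX ⟨a, h.2.1, h⟩

end Stmt19Aux


theorem stmt19 {V : Type*} [Fintype V] (G : SimpleGraph V)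
    (hconn : G.Connected) (hcard : 2 ≤ Fintype.card V) :
    (metricDim G ≤ psiNum G ∧ psiNum G ≤ 2 * mldNum G ∧
        2 * mldNum G ≤ 2 * ldNum G) ∧
      (5 ≤ G.girth →
        metricDim G ≤ psiNum G ∧ psiNum G ≤ mldNum G ∧ mldNum G ≤ ldNum G) := by
  classical
  have hdru : isDoublyResolvingSet G (Set.univ : Set V) := by
    intro x y hxy
    refine ⟨x, trivial, y, trivial, ?_⟩
    unfold doublyResolves
    have := hconn.pos_dist_of_ne hxy
    rw [SimpleGraph.dist_self, SimpleGraph.dist_self, SimpleGraph.dist_comm (u := y) (v := x)]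
    omega
  have hmldu : isMLDSet G (Set.univ : Set V) := by
    constructor
    · intro x y hxy
      exact ⟨x, trivial, by
        rw [SimpleGraph.dist_self]; exact (hconn.pos_dist_of_ne hxy).ne⟩
    · intro x hx; exact absurd trivial hx
  have hldu : isLDSet G (Set.univ : Set V) := by
    constructor
    · intro x hx; exact absurd trivial hx
    · intro x hx; exact absurd trivial hx
  have hpsi : ∃ S : Set V, isDoublyResolvingSet G S ∧ S.ncard = psiNum G :=
    Nat.sInf_mem (s := {n | ∃ S : Set V, isDoublyResolvingSet G S ∧ S.ncard = n})
      ⟨_, Set.univ, hdru, rfl⟩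
  have hmld : ∃ S : Set V, isMLDSet G S ∧ S.ncard = mldNum G :=
    Nat.sInf_mem (s := {n | ∃ S : Set V, isMLDSet G S ∧ S.ncard = n})
      ⟨_, Set.univ, hmldu, rfl⟩
  have hld : ∃ S : Set V, isLDSet G S ∧ S.ncard = ldNum G :=
    Nat.sInf_mem (s := {n | ∃ S : Set V, isLDSet G S ∧ S.ncard = n})
      ⟨_, Set.univ, hldu, rfl⟩
  have h1 : metricDim G ≤ psiNum G := by
    obtain ⟨S, hS, hcardS⟩ := hpsi
    have hres : isResolvingSet G S := by
      intro x y hxy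
      by_contra hn
      push_neg at hn
      obtain ⟨u, hu, v, hv, h⟩ := hS x y hxy
      unfold doublyResolves at h
      rw [hn u hu, hn v hv] at h
      exact h (by omega)
    exact hcardS ▸ Nat.sInf_le ⟨S, hres, rfl⟩
  have hml : mldNum G ≤ ldNum G := by
    obtain ⟨S, hS, hcardS⟩ := hld
    exact hcardS ▸ Nat.sInf_le ⟨S, Stmt19Aux.mld_of_ld hconn hS, rfl⟩
  have h2 : psiNum G ≤ 2 * mldNum G := by
    obtain ⟨S, hS, hcardS⟩ := hmld
    obtain ⟨T, hT, hcT⟩ := Stmt19Aux.exists_dr_of_mld hconn hS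
    have hle : psiNum G ≤ T.ncard := Nat.sInf_le ⟨T, hT, rfl⟩
    omega
  refine ⟨⟨h1, h2, by omega⟩, fun hg => ?_⟩
  have h2' : psiNum G ≤ mldNum G := by
    obtain ⟨S, hS, hcardS⟩ := hmld
    obtain ⟨T, hT, hcT⟩ := Stmt19Aux.exists_dr_of_mld_girth hconn hg hS
    have hle : psiNum G ≤ T.ncard := Nat.sInf_le ⟨T, hT, rfl⟩
    omega
  exact ⟨h1, h2', hml⟩
end
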